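/- Let $D = \{(x_i, y_i)\}_{i=1}^M$ be data points with the $x_i$ evenly spaced on $[0, \Delta]$ and $2(d+1) < M < 100d$. Suppose $P_1$ and $P_2$ are real polynomials of degree at most $d$ each satisfying $\#\{j : |P_a(x_j) - y_j| \geq \delta\} < M/4$ for $a = 1, 2$. Then $|P_1(1) - P_2(1)| \leq (C \Delta^{-1})^d \delta$ for some absolute constant $C$. -/

import Mathlib

open Real Polynomial

lemma smono_gap {m : ℕ} (f : Fin m → ℕ) (hf : StrictMono f) :
    ∀ (k : ℕ) (i j : Fin m), (j:ℕ) = (i:ℕ) + k → f i + k ≤ f j := by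
  intro k
  induction k with
  | zero => intro i j h; have : i = j := Fin.ext (by omega); simp [this]
  | succ k ih =>
    intro i j h
    have hj' : (i:ℕ) + k < m := by omega
    have h1 := ih i ⟨(i:ℕ)+k, hj'⟩ rfl
    have h2 : f ⟨(i:ℕ)+k, hj'⟩ < f j := hf (by simp [Fin.lt_def]; omega)
    omega

lemma smono_dist {m : ℕ} (f : Fin m → ℕ) (hf : StrictMono f) (i j : Fin m) :
    Nat.dist (i:ℕ) (j:ℕ) ≤ Nat.dist (f i) (f j) := by
  rcases le_total (i:ℕ) (j:ℕ) with h | h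
  · have := smono_gap f hf ((j:ℕ) - (i:ℕ)) i j (by omega)
    simp only [Nat.dist]; omega
  · have := smono_gap f hf ((i:ℕ) - (j:ℕ)) j i (by omega)
    simp only [Nat.dist]; omega

lemma dist_cast_abs (a b : ℕ) : |(a:ℝ) - b| = (Nat.dist a b : ℝ) := by
  rcases le_total a b with h | h
  · rw [abs_sub_comm, abs_of_nonneg (sub_nonneg.2 (by exact_mod_cast h))]
    simp only [Nat.dist]
    push_cast [Nat.sub_eq_zero_of_le h, Nat.cast_sub h]; ring
  · rw [abs_of_nonneg (sub_nonneg.2 (by exact_mod_cast h))]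
    simp only [Nat.dist]
    push_cast [Nat.sub_eq_zero_of_le h, Nat.cast_sub h]; ring

lemma distprod (d : ℕ) (i : Fin (d+1)) :
    ∏ j ∈ Finset.univ.erase i, Nat.dist (i:ℕ) (j:ℕ)
      = Nat.factorial (i:ℕ) * Nat.factorial (d - (i:ℕ)) := by
  set c := (i:ℕ) with hc
  set g : ℕ → ℕ := fun k => if k = c then 1 else Nat.dist c k with hg
  have step1 : ∏ j ∈ Finset.univ.erase i, Nat.dist c (j:ℕ) = ∏ j : Fin (d+1), g (j:ℕ) := by
    rw [Finset.prod_congr rfl (fun j hj => ?_)]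
    · exact Finset.prod_erase Finset.univ (by simp [hg, hc])
    · rw [Finset.mem_erase] at hj
      have : (j:ℕ) ≠ c := fun h => hj.1 (Fin.ext h)
      simp [hg, this]
  rw [step1, Fin.prod_univ_eq_prod_range g (d+1)]
  have hcd : c + 1 ≤ d + 1 := by have := i.isLt; omega
  rw [← Finset.prod_range_mul_prod_Ico g hcd, Finset.prod_range_succ]
  have h1 : ∏ k ∈ Finset.range c, g k = Nat.factorial c := by
    have e1 : ∀ k ∈ Finset.range c, g k = (c - 1 - k) + 1 := by
      intro k hk; rw [Finset.mem_range] at hk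
      simp only [hg, if_neg (by omega : ¬ k = c), Nat.dist]; omega
    rw [Finset.prod_congr rfl e1, Finset.prod_range_reflect (fun k => k + 1) c,
      Finset.prod_range_add_one_eq_factorial c]
  have h2 : ∏ k ∈ Finset.Ico (c+1) (d+1), g k = Nat.factorial (d - c) := by
    rw [Finset.prod_Ico_eq_prod_range]
    have hdc : d + 1 - (c + 1) = d - c := by omega
    rw [hdc, ← Finset.prod_range_add_one_eq_factorial (d - c)]
    refine Finset.prod_congr rfl (fun k hk => ?_)
    rw [Finset.mem_range] at hk
    simp only [hg, if_neg (by omega : ¬ c + 1 + k = c), Nat.dist]; omega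
  rw [h1, h2, hg]; simp

lemma fact_ge (d : ℕ) (i : Fin (d+1)) :
    Nat.factorial d ≤ 2^d * (Nat.factorial (i:ℕ) * Nat.factorial (d - (i:ℕ))) := by
  have hid : (i:ℕ) ≤ d := by have := i.isLt; omega
  have hch : Nat.choose d (i:ℕ) ≤ 2^d := by
    calc Nat.choose d (i:ℕ) ≤ ∑ k ∈ Finset.range (d+1), Nat.choose d k :=
          Finset.single_le_sum (fun k _ => Nat.zero_le _) (Finset.mem_range.2 (by omega))
      _ = 2^d := Nat.sum_range_choose d
  calc Nat.factorial d = Nat.choose d (i:ℕ) * Nat.factorial (i:ℕ) * Nat.factorial (d - (i:ℕ)) :=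
        (Nat.choose_mul_factorial_mul_factorial hid).symm
    _ ≤ 2^d * (Nat.factorial (i:ℕ) * Nat.factorial (d - (i:ℕ))) := by
        rw [mul_assoc]; exact Nat.mul_le_mul_right _ hch

lemma pow_div_fact_le (d : ℕ) : (d:ℝ)^d / Nat.factorial d ≤ 3^d := by
  have h1 : (d:ℝ)^d / Nat.factorial d ≤ Real.exp d := by
    calc (d:ℝ)^d / Nat.factorial d
        ≤ ∑ i ∈ Finset.range (d+1), (d:ℝ)^i / Nat.factorial i :=
          Finset.single_le_sum (f := fun i => (d:ℝ)^i / Nat.factorial i)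
            (fun k _ => by positivity) (Finset.mem_range.2 (by omega))
      _ ≤ Real.exp d := Real.sum_le_exp_of_nonneg (by positivity) _
  calc (d:ℝ)^d / Nat.factorial d ≤ Real.exp d := h1
    _ = Real.exp 1 ^ d := (Real.exp_one_pow d).symm
    _ ≤ 3^d := pow_le_pow_left₀ (Real.exp_pos 1).le
        (by have := Real.exp_one_lt_d9; linarith) d

set_option maxHeartbeats 1000000 in
theorem robust_berlekamp_welch :
    ∃ C : ℝ, 0 < C ∧
      ∀ (d M : ℕ) (Δ δ : ℝ), 1 ≤ d → 0 < Δ → Δ ≤ 1 → 0 < δ →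
        2 * (d + 1) < M → M < 100 * d →
        ∀ (y : Fin M → ℝ) (P₁ P₂ : Polynomial ℝ),
          P₁.natDegree ≤ d → P₂.natDegree ≤ d →
          ((Finset.univ.filter fun j : Fin M =>
              δ ≤ |P₁.eval ((j : ℝ) * Δ / ((M : ℝ) - 1)) - y j|).card : ℝ) < (M : ℝ) / 4 →
          ((Finset.univ.filter fun j : Fin M =>
              δ ≤ |P₂.eval ((j : ℝ) * Δ / ((M : ℝ) - 1)) - y j|).card : ℝ) < (M : ℝ) / 4 →
          |P₁.eval 1 - P₂.eval 1| ≤ (C * Δ⁻¹) ^ d * δ := by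
  refine ⟨2400, by norm_num, ?_⟩
  intro d M Δ δ hd hΔ hΔ1 hδ hM1 hM2 y P₁ P₂ hP₁ hP₂ hB₁ hB₂
  have hM5 : 5 ≤ M := by omega
  have hMR : (1:ℝ) ≤ (M:ℝ) - 1 := by
    have : (5:ℝ) ≤ (M:ℝ) := by exact_mod_cast hM5
    linarith
  set c0 : ℝ := Δ / ((M:ℝ) - 1) with hc0def
  have hc0 : 0 < c0 := div_pos hΔ (by linarith)
  set x : Fin M → ℝ := fun j => (j : ℝ) * Δ / ((M : ℝ) - 1) with hxdef
  have hx : ∀ j : Fin M, x j = ((j:ℕ):ℝ) * c0 := by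
    intro j; simp only [hxdef, hc0def]; push_cast; ring
  set Q : Polynomial ℝ := P₁ - P₂ with hQdef
  have hQd : Q.natDegree ≤ d :=
    le_trans (Polynomial.natDegree_sub_le _ _) (max_le hP₁ hP₂)
  set G : Finset (Fin M) := Finset.univ.filter (fun j => |Q.eval (x j)| < 2*δ) with hGdef
  have hGsub : Finset.univ \
      ((Finset.univ.filter fun j : Fin M => δ ≤ |P₁.eval (x j) - y j|) ∪
       (Finset.univ.filter fun j : Fin M => δ ≤ |P₂.eval (x j) - y j|)) ⊆ G := by
    intro j hj
    simp only [Finset.mem_sdiff, Finset.mem_union, Finset.mem_filter, Finset.mem_univ,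
      true_and, not_or, not_le] at hj
    simp only [hGdef, Finset.mem_filter, Finset.mem_univ, true_and, hQdef,
      Polynomial.eval_sub]
    have h1 := hj.1
    have h2 := hj.2
    calc |P₁.eval (x j) - P₂.eval (x j)|
        = |(P₁.eval (x j) - y j) - (P₂.eval (x j) - y j)| := by
          rw [show P₁.eval (x j) - P₂.eval (x j)
            = (P₁.eval (x j) - y j) - (P₂.eval (x j) - y j) by ring]
      _ ≤ |P₁.eval (x j) - y j| + |P₂.eval (x j) - y j| := abs_sub _ _
      _ < 2*δ := by linarith
  have hGcard : d + 1 ≤ G.card := by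
    set B₁ := Finset.univ.filter fun j : Fin M => δ ≤ |P₁.eval (x j) - y j| with hb1
    set B₂ := Finset.univ.filter fun j : Fin M => δ ≤ |P₂.eval (x j) - y j| with hb2
    have hcard1 : (Finset.univ \ (B₁ ∪ B₂)).card ≤ G.card := Finset.card_le_card hGsub
    have hcard2 : (Finset.univ \ (B₁ ∪ B₂)).card = M - (B₁ ∪ B₂).card := by
      rw [Finset.card_sdiff_of_subset (Finset.subset_univ _), Finset.card_univ, Fintype.card_fin]
    have hcard3 : (B₁ ∪ B₂).card ≤ B₁.card + B₂.card := Finset.card_union_le _ _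
    have hbR : (B₁.card : ℝ) + B₂.card < (M:ℝ)/2 := by
      have e1 : B₁ = Finset.univ.filter fun j : Fin M =>
          δ ≤ |P₁.eval ((j : ℝ) * Δ / ((M : ℝ) - 1)) - y j| := rfl
      have e2 : B₂ = Finset.univ.filter fun j : Fin M =>
          δ ≤ |P₂.eval ((j : ℝ) * Δ / ((M : ℝ) - 1)) - y j| := rfl
      rw [e1, e2]; push_cast at hB₁ hB₂ ⊢; linarith
    have hbN : 2 * (B₁.card + B₂.card) < M := by
      have : ((2 * (B₁.card + B₂.card) : ℕ) : ℝ) < M := by push_cast; linarith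
      exact_mod_cast this
    omega
  obtain ⟨T, hTG, hTc⟩ := Finset.exists_subset_card_eq (s := G) (n := d+1) hGcard
  set f := T.orderEmbOfFin hTc with hfdef
  have hmem : ∀ i, (f i : Fin M) ∈ G := fun i => hTG (T.orderEmbOfFin_mem hTc i)
  set n : Fin (d+1) → ℕ := fun i => ((f i : Fin M) : ℕ) with hndef
  have hnmono : StrictMono n := fun a b hab => f.strictMono hab
  set v : Fin (d+1) → ℝ := fun i => ((n i : ℕ) : ℝ) * c0 with hvdef
  have hvx : ∀ i, v i = x (f i) := fun i => (hx (f i)).symm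
  have hvinj : Set.InjOn v (Finset.univ : Finset (Fin (d+1))) := by
    intro a _ b _ hab
    have : n a = n b := by
      have := mul_right_cancel₀ (ne_of_gt hc0) hab
      exact_mod_cast this
    exact hnmono.injective this
  have hdeg : Q.degree < ((Finset.univ : Finset (Fin (d+1))).card : WithBot ℕ) := by
    rw [Finset.card_univ, Fintype.card_fin]
    refine lt_of_le_of_lt Polynomial.degree_le_natDegree ?_
    exact_mod_cast Nat.lt_succ_of_le hQd
  have hinterp := Lagrange.eq_interpolate (s := (Finset.univ : Finset (Fin (d+1))))
    (f := Q) hvinj hdeg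
  have hQsmall : ∀ i, |Q.eval (v i)| < 2*δ := by
    intro i
    have := hmem i
    rw [hGdef, Finset.mem_filter] at this
    rw [hvx]; exact this.2
  have heval : Q.eval 1
      = ∑ i : Fin (d+1), Q.eval (v i) * (Lagrange.basis Finset.univ v i).eval 1 := by
    conv_lhs => rw [hinterp]
    rw [Lagrange.interpolate_apply, Polynomial.eval_finset_sum]
    exact Finset.sum_congr rfl fun i _ => by rw [Polynomial.eval_mul, Polynomial.eval_C]
  have hbasis : ∀ i : Fin (d+1),
      |(Lagrange.basis Finset.univ v i).eval 1| ≤ c0⁻¹^d * ((2:ℝ)^d / Nat.factorial d) := by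
    intro i
    have hev : (Lagrange.basis Finset.univ v i).eval 1
        = ∏ j ∈ Finset.univ.erase i, ((v i - v j)⁻¹ * (1 - v j)) := by
      simp [Lagrange.basis, Polynomial.eval_prod, Lagrange.basisDivisor]
    rw [hev, Finset.abs_prod]
    have hstep : ∀ j ∈ Finset.univ.erase i,
        |(v i - v j)⁻¹ * (1 - v j)| ≤ (c0 * (Nat.dist (i:ℕ) (j:ℕ) : ℝ))⁻¹ := by
      intro j hj
      have hji : j ≠ i := (Finset.mem_erase.1 hj).1
      have hdij : 1 ≤ Nat.dist (i:ℕ) (j:ℕ) := by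
        have : (i:ℕ) ≠ (j:ℕ) := fun h => hji (Fin.ext h.symm)
        simp only [Nat.dist]; omega
      have hvij : |v i - v j| = c0 * (Nat.dist (n i) (n j) : ℝ) := by
        show |((n i : ℕ):ℝ) * c0 - ((n j : ℕ):ℝ) * c0| = _
        rw [show ((n i : ℕ):ℝ) * c0 - ((n j : ℕ):ℝ) * c0
          = (((n i : ℕ):ℝ) - (n j : ℕ)) * c0 by ring]
        rw [abs_mul, abs_of_pos hc0, dist_cast_abs]; ring
      have hge : c0 * (Nat.dist (i:ℕ) (j:ℕ) : ℝ) ≤ |v i - v j| := by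
        rw [hvij]
        have h1 := smono_dist n hnmono i j
        have h2 : (Nat.dist (i:ℕ) (j:ℕ) : ℝ) ≤ (Nat.dist (n i) (n j) : ℝ) := by
          exact_mod_cast h1
        nlinarith
      have hpos : 0 < c0 * (Nat.dist (i:ℕ) (j:ℕ) : ℝ) := by
        have : (1:ℝ) ≤ (Nat.dist (i:ℕ) (j:ℕ) : ℝ) := by exact_mod_cast hdij
        nlinarith
      have hvj0 : 0 ≤ v j := by show (0:ℝ) ≤ ((n j : ℕ):ℝ) * c0; positivity
      have hvj1 : v j ≤ 1 := by
        show ((n j : ℕ):ℝ) * c0 ≤ 1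
        have hnjn : n j ≤ M - 1 := by
          show ((f j : Fin M) : ℕ) ≤ M - 1
          have := (f j : Fin M).isLt; omega
        have hnj : ((n j : ℕ):ℝ) ≤ (M:ℝ) - 1 := by
          calc ((n j : ℕ):ℝ) ≤ ((M - 1 : ℕ) : ℝ) := by exact_mod_cast hnjn
            _ = (M:ℝ) - 1 := by rw [Nat.cast_sub (by omega : 1 ≤ M)]; norm_num
        calc ((n j : ℕ):ℝ) * c0 ≤ ((M:ℝ) - 1) * c0 := by nlinarith
          _ = Δ := by rw [hc0def]; field_simp
          _ ≤ 1 := hΔ1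
      rw [abs_mul]
      calc |(v i - v j)⁻¹| * |1 - v j| ≤ |(v i - v j)⁻¹| * 1 := by
            apply mul_le_mul_of_nonneg_left _ (abs_nonneg _)
            rw [abs_le]
            constructor <;> linarith
        _ = |v i - v j|⁻¹ := by rw [mul_one, abs_inv]
        _ ≤ (c0 * (Nat.dist (i:ℕ) (j:ℕ) : ℝ))⁻¹ := inv_anti₀ hpos hge
    calc ∏ j ∈ Finset.univ.erase i, |(v i - v j)⁻¹ * (1 - v j)|
        ≤ ∏ j ∈ Finset.univ.erase i, (c0 * (Nat.dist (i:ℕ) (j:ℕ) : ℝ))⁻¹ :=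
          Finset.prod_le_prod (fun j _ => abs_nonneg _) hstep
      _ = (∏ j ∈ Finset.univ.erase i, (c0 * (Nat.dist (i:ℕ) (j:ℕ) : ℝ)))⁻¹ := by
          rw [← Finset.prod_inv_distrib]
      _ = (c0^d * ((Nat.factorial (i:ℕ) * Nat.factorial (d - (i:ℕ)) : ℕ) : ℝ))⁻¹ := by
          rw [Finset.prod_mul_distrib, Finset.prod_const,
            Finset.card_erase_of_mem (Finset.mem_univ i), Finset.card_univ, Fintype.card_fin,
            Nat.add_sub_cancel]
          congr 1
          rw [← distprod d i, Nat.cast_prod]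
      _ = c0⁻¹^d * (((Nat.factorial (i:ℕ) * Nat.factorial (d - (i:ℕ)) : ℕ) : ℝ))⁻¹ := by
          rw [mul_inv, inv_pow]
      _ ≤ c0⁻¹^d * ((2:ℝ)^d / Nat.factorial d) := by
          apply mul_le_mul_of_nonneg_left _ (by positivity)
          have hFpos : (0:ℝ) < ((Nat.factorial (i:ℕ) * Nat.factorial (d - (i:ℕ)) : ℕ) : ℝ) := by
            positivity
          have hfacpos : (0:ℝ) < (Nat.factorial d : ℝ) := by positivity
          rw [inv_eq_one_div, div_le_div_iff₀ hFpos hfacpos, one_mul]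
          exact_mod_cast fact_ge d i
  have hsum : |Q.eval 1| ≤ ((d:ℝ)+1) * (2*δ * (c0⁻¹^d * ((2:ℝ)^d / Nat.factorial d))) := by
    rw [heval]
    calc |∑ i : Fin (d+1), Q.eval (v i) * (Lagrange.basis Finset.univ v i).eval 1|
        ≤ ∑ i : Fin (d+1), |Q.eval (v i) * (Lagrange.basis Finset.univ v i).eval 1| :=
          Finset.abs_sum_le_sum_abs _ _
      _ ≤ ∑ _i : Fin (d+1), 2*δ * (c0⁻¹^d * ((2:ℝ)^d / Nat.factorial d)) := by
          apply Finset.sum_le_sum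
          intro i _
          rw [abs_mul]
          exact mul_le_mul (le_of_lt (hQsmall i)) (hbasis i) (abs_nonneg _) (by positivity)
      _ = ((d:ℝ)+1) * (2*δ * (c0⁻¹^d * ((2:ℝ)^d / Nat.factorial d))) := by
          rw [Finset.sum_const, Finset.card_univ, Fintype.card_fin]; push_cast; ring
  have hfinal : ((d:ℝ)+1) * (2*δ * (c0⁻¹^d * ((2:ℝ)^d / Nat.factorial d)))
      ≤ (2400 * Δ⁻¹)^d * δ := by
    have hc0inv : c0⁻¹ = ((M:ℝ) - 1) * Δ⁻¹ := by
      rw [hc0def]; field_simp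
    have hMd : (M:ℝ) - 1 ≤ 100 * d := by
      have : (M:ℝ) ≤ 100 * d := by exact_mod_cast hM2.le
      linarith
    have hc0b : c0⁻¹^d ≤ (100 * (d:ℝ) * Δ⁻¹)^d := by
      apply pow_le_pow_left₀ (by positivity)
      rw [hc0inv]
      exact mul_le_mul_of_nonneg_right hMd (by positivity)
    have hkey : c0⁻¹^d / (Nat.factorial d : ℝ) ≤ (300 * Δ⁻¹)^d := by
      have hfacpos : (0:ℝ) < (Nat.factorial d : ℝ) := by positivity
      calc c0⁻¹^d / (Nat.factorial d : ℝ) ≤ (100 * (d:ℝ) * Δ⁻¹)^d / (Nat.factorial d : ℝ) := by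
            gcongr
        _ = (100*Δ⁻¹)^d * ((d:ℝ)^d / Nat.factorial d) := by
            rw [show (100 * (d:ℝ) * Δ⁻¹) = (100*Δ⁻¹)*(d:ℝ) by ring, mul_pow]; ring
        _ ≤ (100*Δ⁻¹)^d * 3^d := by
            exact mul_le_mul_of_nonneg_left (pow_div_fact_le d) (by positivity)
        _ = (300*Δ⁻¹)^d := by rw [← mul_pow]; congr 1; ring
    have h2d : (d:ℝ)+1 ≤ 2^d := by
      have := Nat.lt_two_pow_self (n := d)
      have : (d:ℕ)+1 ≤ 2^d := this
      exact_mod_cast this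
    have h2 : (2:ℝ) ≤ 2^d := by
      calc (2:ℝ) = 2^1 := (pow_one 2).symm
        _ ≤ 2^d := pow_le_pow_right₀ (by norm_num) hd
    calc ((d:ℝ)+1) * (2*δ * (c0⁻¹^d * ((2:ℝ)^d / Nat.factorial d)))
        = ((d:ℝ)+1) * 2 * 2^d * (c0⁻¹^d / Nat.factorial d) * δ := by ring
      _ ≤ 2^d * 2^d * (2:ℝ)^d * ((300*Δ⁻¹)^d) * δ := by
          apply mul_le_mul_of_nonneg_right _ hδ.le
          gcongr ?_ * ?_ * ?_ * ?_ <;>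
            first | exact h2d | exact h2 | exact hkey | exact le_refl _
      _ = (2400 * Δ⁻¹)^d * δ := by
          rw [← mul_pow, ← mul_pow, ← mul_pow]
          congr 2
          ring
  calc |P₁.eval 1 - P₂.eval 1| = |Q.eval 1| := by rw [hQdef, Polynomial.eval_sub]
    _ ≤ _ := le_trans hsum hfinal
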